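/- The Triviality, Symmetry, and Decomposition rules are sound for K-relations over any nontrivial commutative semiring K: for every K-relation R over a finite schema V with finite nonempty domains and pairwise disjoint X, Y, Z, W ⊆ V, (i) R satisfies CI(X; Y, ∅); (ii) if R satisfies CI(X; Y, Z) then R satisfies CI(X; Z, Y); and (iii) if R satisfies CI(X; Y, Z∪W) then R satisfies CI(X; Y, Z). -/
import Mathlib


/-! # Preliminaries: K-relations over semirings -/

open Finset

variable {V : Type*}

/-- A tuple over the finite set `X` of variables: it assigns to each variable
`a ∈ X` a value in its domain `Dom a`. -/
abbrev Tup (Dom : V → Type*) (X : Finset V) : Type _ :=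
  ∀ a : X, Dom a

/-- Restriction `t[Y]` of a tuple `t` over `X` to a subset `Y ⊆ X`. -/
def Tup.restrict {Dom : V → Type*} {X Y : Finset V} (h : Y ⊆ X) (t : Tup Dom X) :
    Tup Dom Y :=
  fun a => t ⟨a.1, h a.2⟩

open Classical in
/-- The marginal of a `K`-relation `R` over a schema `X` on a subset `Y ⊆ X`,
evaluated at a tuple `u` over `Y`: the sum of `R t` over all tuples `t` over `X`
with `t[Y] = u`. -/
noncomputable def margin {K : Type*} [CommSemiring K] [DecidableEq V]
    {Dom : V → Type*} [∀ a, Fintype (Dom a)] {X Y : Finset V}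
    (R : Tup Dom X → K) (h : Y ⊆ X) (u : Tup Dom Y) : K :=
  ∑ t : Tup Dom X, if Tup.restrict h t = u then R t else 0

open Classical in
/-- `c_S(u)`: the product of the marginal `S[Z]` over all tuples `v` in the
support of `S[Z]` different from `u` (empty products are `1`). -/
noncomputable def cfun {K : Type*} [CommSemiring K] [DecidableEq V]
    {Dom : V → Type*} [∀ a, Fintype (Dom a)] {Y Z : Finset V}
    (S : Tup Dom Y → K) (h : Z ⊆ Y) (u : Tup Dom Z) : K :=
  ∏ v : Tup Dom Z, if margin S h v ≠ 0 ∧ v ≠ u then margin S h v else 1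

/-- The join `R ⋈ S` of a `K`-relation `R` over `X` and a `K`-relation `S` over `Y`,
realized on the schema `T = X ∪ Y`:
`(R ⋈ S)(t) = R(t[X]) ⬝ S(t[Y]) ⬝ c_S(t[X ∩ Y])`. -/
noncomputable def joinOn {K : Type*} [CommSemiring K] [DecidableEq V]
    {Dom : V → Type*} [∀ a, Fintype (Dom a)] {X Y T : Finset V}
    (R : Tup Dom X → K) (S : Tup Dom Y → K)
    (hX : X ⊆ T) (hY : Y ⊆ T) (_hT : T ⊆ X ∪ Y) : Tup Dom T → K :=
  fun t =>
    R (Tup.restrict hX t) * S (Tup.restrict hY t) *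
      cfun (Z := X ∩ Y) S Finset.inter_subset_right
        (Tup.restrict ((Finset.inter_subset_right (s₁ := X)).trans hY) t)

/-- A `K`-relation `R` over the schema `S` satisfies the conditional independence
`CI(X; Y, Z)` (for `X, Y, Z ⊆ S`) if for every tuple `t` over `X ∪ Y ∪ Z`,
`R(t[X∪Y]) ⬝ R(t[X∪Z]) = R(t[X∪Y∪Z]) ⬝ R(t[X])`, all values being marginals of `R`. -/
def satCI {K : Type*} [CommSemiring K] [DecidableEq V]
    {Dom : V → Type*} [∀ a, Fintype (Dom a)] {S X Y Z : Finset V}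
    (R : Tup Dom S → K) (hX : X ⊆ S) (hY : Y ⊆ S) (hZ : Z ⊆ S) : Prop :=
  ∀ t : Tup Dom (X ∪ Y ∪ Z),
    margin R (Finset.union_subset hX hY) (Tup.restrict Finset.subset_union_left t) *
      margin R (Finset.union_subset hX hZ)
        (Tup.restrict (Finset.union_subset
          (Finset.subset_union_left.trans Finset.subset_union_left)
          Finset.subset_union_right) t) =
    margin R (Finset.union_subset (Finset.union_subset hX hY) hZ) t *
      margin R hX
        (Tup.restrict (Finset.subset_union_left.trans Finset.subset_union_left) t)

/-- A `K`-relation `R` over the schema `S` satisfies the functional dependency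
`U → W` if any two tuples in the support of `R` agreeing on `U` agree on `W`. -/
def satFD {K : Type*} [Zero K] {Dom : V → Type*} {S U W : Finset V}
    (R : Tup Dom S → K) (hU : U ⊆ S) (hW : W ⊆ S) : Prop :=
  ∀ t t' : Tup Dom S, R t ≠ 0 → R t' ≠ 0 →
    Tup.restrict hU t = Tup.restrict hU t' → Tup.restrict hW t = Tup.restrict hW t'

/-- Two `K`-relations over the same schema are equivalent (up to normalization),
`R ≡ R'`, if `aR = bR'` for some nonzero `a, b ∈ K`. -/
def equivRel {K : Type*} [CommSemiring K] {Dom : V → Type*} {X : Finset V}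
    (R R' : Tup Dom X → K) : Prop :=
  ∃ a b : K, a ≠ 0 ∧ b ≠ 0 ∧ ∀ t, a * R t = b * R' t

/-- `K` is `⊕`-positive: `a + b = 0` implies `a = b = 0`. -/
def plusPos (K : Type*) [CommSemiring K] : Prop :=
  ∀ a b : K, a + b = 0 → a = 0 ∧ b = 0

/-- `K` has no divisors of zero. -/
def noZD (K : Type*) [CommSemiring K] : Prop :=
  ∀ a b : K, a * b = 0 → a = 0 ∨ b = 0

/-- `K` is positive: `⊕`-positive and without zero divisors. -/
def posSemiring (K : Type*) [CommSemiring K] : Prop :=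
  plusPos K ∧ noZD K

/-- `K` is multiplicatively cancellative. -/
def mulCanc (K : Type*) [CommSemiring K] : Prop :=
  ∀ a b c : K, a ≠ 0 → a * b = a * c → b = c

/-- `K` is additively cancellative. -/
def addCanc (K : Type*) [CommSemiring K] : Prop :=
  ∀ a b c : K, a + b = a + c → b = c

/-- `K` is naturally totally ordered: the preorder `a ≤ b ↔ ∃ c, a + c = b`
is antisymmetric and total. -/
def natTotOrd (K : Type*) [CommSemiring K] : Prop :=
  (∀ a b : K, (∃ c, a + c = b) → (∃ c, b + c = a) → a = b) ∧
    (∀ a b : K, (∃ c, a + c = b) ∨ (∃ c, b + c = a))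

/-- `K` is a semifield: every nonzero element has a multiplicative inverse. -/
def isSemifield (K : Type*) [CommSemiring K] : Prop :=
  ∀ a : K, a ≠ 0 → ∃ b, a * b = 1

theorem subL [DecidableEq V] {X Y Z : Finset V} : X ⊆ X ∪ Y ∪ Z :=
  Finset.subset_union_left.trans Finset.subset_union_left

theorem subM [DecidableEq V] {X Y Z : Finset V} : Y ⊆ X ∪ Y ∪ Z :=
  Finset.subset_union_right.trans Finset.subset_union_left

theorem subR [DecidableEq V] {X Y Z : Finset V} : Z ⊆ X ∪ Y ∪ Z :=
  Finset.subset_union_right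

theorem subXY [DecidableEq V] {X Y Z : Finset V} : X ∪ Y ⊆ X ∪ Y ∪ Z :=
  Finset.subset_union_left

theorem subXZ [DecidableEq V] {X Y Z : Finset V} : X ∪ Z ⊆ X ∪ Y ∪ Z :=
  Finset.union_subset subL subR

theorem unionSplit [DecidableEq V] {X Y Z : Finset V} :
    X ∪ Y ∪ Z ⊆ (X ∪ Y) ∪ (X ∪ Z) := by
  intro a ha
  simp only [Finset.mem_union] at ha ⊢
  tauto

section Aux

open Classical

variable {K : Type*} [CommSemiring K] [DecidableEq V] {Dom : V → Type*}
  [∀ a, Fintype (Dom a)]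

set_option maxHeartbeats 1000000 in
theorem margin_congr' {S A B : Finset V} (R : Tup Dom S → K) (hA : A ⊆ S) (hB : B ⊆ S)
    (hAB : A = B) (u : Tup Dom A) (v : Tup Dom B)
    (hpt : ∀ a (ha : a ∈ A) (hb : a ∈ B), u ⟨a, ha⟩ = v ⟨a, hb⟩) :
    margin R hA u = margin R hB v := by
  subst hAB
  have huv : u = v := funext fun a => hpt a.1 a.2 a.2
  subst huv
  rfl

set_option maxHeartbeats 1000000 in
theorem sum_margin' {S T' C T D : Finset V}
    (R : Tup Dom S → K) (hT'S : T' ⊆ S) (hC : C ⊆ T') (hT : T ⊆ T')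
    (hcover : T' ⊆ T ∪ C) (hD : ∀ a, a ∈ D ↔ a ∈ T ∧ a ∈ C) (hDT : D ⊆ T)
    (t : Tup Dom T) :
    (∑ s : Tup Dom T', if Tup.restrict hT s = t
        then margin R (hC.trans hT'S) (Tup.restrict hC s) else 0)
      = margin R ((hDT.trans hT).trans hT'S) (Tup.restrict hDT t) := by
  have hDS : D ⊆ S := (hDT.trans hT).trans hT'S
  unfold margin
  have step1 : ∀ s : Tup Dom T',
      (if Tup.restrict hT s = t
        then ∑ r : Tup Dom S,
          if Tup.restrict (hC.trans hT'S) r = Tup.restrict hC s then R r else 0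
        else 0)
      = ∑ r : Tup Dom S,
          if Tup.restrict hT s = t ∧ Tup.restrict (hC.trans hT'S) r = Tup.restrict hC s
          then R r else 0 := by
    intro s
    by_cases h : Tup.restrict hT s = t <;> simp [h]
  rw [Finset.sum_congr rfl fun s _ => step1 s, Finset.sum_comm]
  refine Finset.sum_congr rfl fun r _ => ?_
  have key : ∀ s : Tup Dom T',
      (Tup.restrict hT s = t ∧ Tup.restrict (hC.trans hT'S) r = Tup.restrict hC s)
      ↔ ((Tup.restrict hDS r = Tup.restrict hDT t) ∧
          s = fun a : T' => if h : a.1 ∈ T then t ⟨a.1, h⟩ else r ⟨a.1, hT'S a.2⟩) := by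
    intro s
    constructor
    · rintro ⟨hP, hQ⟩
      have hs : ∀ a (ha : a ∈ T), s ⟨a, hT ha⟩ = t ⟨a, ha⟩ :=
        fun a ha => congrFun hP ⟨a, ha⟩
      have hr : ∀ a (ha : a ∈ C), r ⟨a, hT'S (hC ha)⟩ = s ⟨a, hC ha⟩ :=
        fun a ha => congrFun hQ ⟨a, ha⟩
      constructor
      · funext a
        obtain ⟨haT, haC⟩ := (hD a.1).1 a.2
        show r ⟨a.1, hDS a.2⟩ = t ⟨a.1, hDT a.2⟩
        calc r ⟨a.1, hDS a.2⟩ = s ⟨a.1, hC haC⟩ := hr a.1 haC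
          _ = t ⟨a.1, hDT a.2⟩ := hs a.1 haT
      · funext a
        show s a = if h : a.1 ∈ T then t ⟨a.1, h⟩ else r ⟨a.1, hT'S a.2⟩
        by_cases h : a.1 ∈ T
        · rw [dif_pos h]
          exact hs a.1 h
        · rw [dif_neg h]
          have haC : a.1 ∈ C := by
            rcases Finset.mem_union.1 (hcover a.2) with h' | h'
            · exact absurd h' h
            · exact h'
          exact (hr a.1 haC).symm
    · rintro ⟨hA', rfl⟩
      have hApt : ∀ a (ha : a ∈ D), r ⟨a, hDS ha⟩ = t ⟨a, hDT ha⟩ :=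
        fun a ha => congrFun hA' ⟨a, ha⟩
      constructor
      · funext a
        show (if h : a.1 ∈ T then t ⟨a.1, h⟩ else r ⟨a.1, hT'S (hT a.2)⟩) = t a
        rw [dif_pos a.2]
      · funext a
        show r ⟨a.1, hT'S (hC a.2)⟩
            = if h : a.1 ∈ T then t ⟨a.1, h⟩ else r ⟨a.1, hT'S (hC a.2)⟩
        by_cases h : a.1 ∈ T
        · rw [dif_pos h]
          exact hApt a.1 ((hD a.1).2 ⟨h, a.2⟩)
        · rw [dif_neg h]
  rw [Finset.sum_congr rfl fun s _ => if_congr (key s) rfl rfl]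
  by_cases hA : Tup.restrict hDS r = Tup.restrict hDT t
  · simp [hA, Finset.sum_ite_eq']
  · simp [hA]

set_option maxHeartbeats 1000000 in
theorem trivialityCI {S X Y : Finset V} (R : Tup Dom S → K)
    (hX : X ⊆ S) (hY : Y ⊆ S) (hE : (∅ : Finset V) ⊆ S) :
    satCI R hX hY hE := by
  intro t
  have h2 : margin R (Finset.union_subset (Finset.union_subset hX hY) hE) t
      = margin R (Finset.union_subset hX hY) (Tup.restrict Finset.subset_union_left t) :=
    margin_congr' R _ _ (by simp) _ _ (fun a ha hb => rfl)
  rw [h2]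
  congr 1
  exact margin_congr' R _ _ (by simp) _ _ (fun a ha hb => rfl)

set_option maxHeartbeats 1000000 in
theorem symmetryCI {S X Y Z : Finset V} (R : Tup Dom S → K)
    (hX : X ⊆ S) (hY : Y ⊆ S) (hZ : Z ⊆ S)
    (h : satCI R hX hY hZ) : satCI R hX hZ hY := by
  intro t
  have hmem : ∀ a, a ∈ X ∪ Y ∪ Z → a ∈ X ∪ Z ∪ Y := by
    intro a; simp only [Finset.mem_union]; tauto
  have h' := h (fun a => t ⟨a.1, hmem a.1 a.2⟩)
  have hm : margin R (Finset.union_subset (Finset.union_subset hX hY) hZ)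
        (fun a => t ⟨a.1, hmem a.1 a.2⟩)
      = margin R (Finset.union_subset (Finset.union_subset hX hZ) hY) t :=
    margin_congr' R _ _ (Finset.union_right_comm X Y Z) _ _ (fun a ha hb => rfl)
  rw [hm] at h'
  rw [mul_comm]
  exact h'

set_option maxHeartbeats 1000000 in
theorem decompositionCI {S X Y Z W : Finset V} (R : Tup Dom S → K)
    (hX : X ⊆ S) (hY : Y ⊆ S) (hZ : Z ⊆ S) (hW : W ⊆ S) (hYW : Disjoint Y W)
    (h : satCI R hX hY (Finset.union_subset hZ hW)) : satCI R hX hY hZ := by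
  intro t
  have hTT' : X ∪ Y ∪ Z ⊆ X ∪ Y ∪ (Z ∪ W) := by
    intro a; simp only [Finset.mem_union]; tauto
  have hT'S : X ∪ Y ∪ (Z ∪ W) ⊆ S :=
    Finset.union_subset (Finset.union_subset hX hY) (Finset.union_subset hZ hW)
  have hCsub : X ∪ (Z ∪ W) ⊆ X ∪ Y ∪ (Z ∪ W) := by
    intro a; simp only [Finset.mem_union]; tauto
  have e1 : margin R (Finset.union_subset (Finset.union_subset hX hY) hZ) t
      = ∑ s : Tup Dom (X ∪ Y ∪ (Z ∪ W)),
          if Tup.restrict hTT' s = t then margin R hT'S s else 0 :=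
    (sum_margin' (D := X ∪ Y ∪ Z) R hT'S (Finset.Subset.refl _) hTT'
      (fun a ha => Finset.mem_union.2 (Or.inr ha))
      (fun a => by simp only [Finset.mem_union]; tauto)
      (Finset.Subset.refl _) t).symm
  have e2 : margin R (Finset.union_subset hX hZ)
        (Tup.restrict (Finset.union_subset
          (Finset.subset_union_left.trans Finset.subset_union_left)
          Finset.subset_union_right) t)
      = ∑ s : Tup Dom (X ∪ Y ∪ (Z ∪ W)),
          if Tup.restrict hTT' s = t
          then margin R (hCsub.trans hT'S) (Tup.restrict hCsub s) else 0 :=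
    (sum_margin' (D := X ∪ Z) R hT'S hCsub hTT'
      (by intro a ha; simp only [Finset.mem_union] at ha ⊢; tauto)
      (fun a => by
        simp only [Finset.mem_union]
        constructor
        · tauto
        · rintro ⟨hT1, hC1⟩
          rcases hC1 with h2 | h2 | h2
          · exact Or.inl h2
          · exact Or.inr h2
          · rcases hT1 with (h1 | h1) | h1
            · exact Or.inl h1
            · exact absurd h2 (Finset.disjoint_left.1 hYW h1)
            · exact Or.inr h1)
      (by intro a ha; simp only [Finset.mem_union] at ha ⊢; tauto) t).symm
  rw [e1, e2, Finset.mul_sum, Finset.sum_mul]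
  refine Finset.sum_congr rfl fun s _ => ?_
  by_cases hs : Tup.restrict hTT' s = t
  · simp only [hs, if_true]
    rw [← hs]
    exact h s
  · simp [hs]

end Aux

set_option maxHeartbeats 1000000 in
/-- Triviality, Symmetry, and Decomposition are sound for `K`-relations over any
nontrivial commutative semiring. -/
theorem triviality_symmetry_decomposition_sound
    [DecidableEq V] [Fintype V] {Dom : V → Type*}
    [∀ a, Fintype (Dom a)] [∀ a, Nonempty (Dom a)]
    {K : Type*} [CommSemiring K] [Nontrivial K]
    {X Y Z W : Finset V}
    (hXY : Disjoint X Y) (hXZ : Disjoint X Z) (hXW : Disjoint X W)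
    (hYZ : Disjoint Y Z) (hYW : Disjoint Y W) (hZW : Disjoint Z W)
    (R : Tup Dom (Finset.univ : Finset V) → K) :
    satCI R (Finset.subset_univ X) (Finset.subset_univ Y)
        (Finset.subset_univ (∅ : Finset V)) ∧
      (satCI R (Finset.subset_univ X) (Finset.subset_univ Y) (Finset.subset_univ Z) →
        satCI R (Finset.subset_univ X) (Finset.subset_univ Z) (Finset.subset_univ Y)) ∧
      (satCI R (Finset.subset_univ X) (Finset.subset_univ Y)
          (Finset.subset_univ (Z ∪ W)) →
        satCI R (Finset.subset_univ X) (Finset.subset_univ Y)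
          (Finset.subset_univ Z)) := by
  exact ⟨trivialityCI R _ _ _, fun h => symmetryCI R _ _ _ h,
    fun h => decompositionCI R (Finset.subset_univ X) (Finset.subset_univ Y)
      (Finset.subset_univ Z) (Finset.subset_univ W) hYW h⟩
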